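/- (Bound on the E-term of the bias decomposition.) Let (S,A,P,r,γ) be a finite discounted MDP, σ : S × A → ℝ with σ̃ ≤ σ(s,a) ≤ 1 for all (s,a) where σ̃ > 0, 0 < α ≤ 1, and Σ the diagonal (S×A)×(S×A) matrix of σ. Let η > 0, λ > 0, k ≥ 1 an integer, and let π*, π_0, …, π_k be policies with ‖π_j − π_{j−1}‖∞ ≤ |A|·η/(λ(1−γ)) for 1 ≤ j ≤ k. Set A_j = I − α·Σ·(I − γ·P^{π_j}) for 0 ≤ j ≤ k, and let R_0,…,R_{k−1} : S × A → ℝ with ‖R_{j−1}‖∞ ≤ 1/(1−γ). Then for every s ∈ S: ∑_{j=1}^k |⟨(((A_j)^{k−j+1}) − ((A_{j−1})^{k−j+1}))ᵀ·J_s·(π* − π_{j−1}), R_{j−1}⟩| ≤ 2γ·|A|²·η/(α·λ·σ̃²·(1−γ)⁴). -/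

import Mathlib

/-- The state–action transition matrix `P^π` of a policy. -/
def saMatrix {S A : Type*} [Fintype S] [Fintype A]
    (P : S → A → S → ℝ) (pol : S → A → ℝ) : Matrix (S × A) (S × A) ℝ :=
  Matrix.of fun q q' => P q.1 q.2 q'.1 * pol q'.1 q'.2

/-- The diagonal index matrix `J_s` selecting the rows/columns of state `s`. -/
noncomputable def Jmat {S A : Type*} [Fintype S] [Fintype A] [DecidableEq S] [DecidableEq A]
    (s : S) : Matrix (S × A) (S × A) ℝ :=
  Matrix.diagonal fun p => if p.1 = s then 1 else 0


attribute [local instance] Matrix.linftyOpNormedRing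

private lemma mat_norm_le {n : Type*} [Fintype n] [DecidableEq n] (M : Matrix n n ℝ) {c : ℝ}
    (hc : 0 ≤ c) (h : ∀ i, ∑ j, |M i j| ≤ c) : ‖M‖ ≤ c := by
  rw [Matrix.linfty_opNorm_def, ← Real.coe_toNNReal c hc, NNReal.coe_le_coe, Finset.sup_le_iff]
  intro i _
  rw [← NNReal.coe_le_coe, Real.coe_toNNReal c hc]
  push_cast
  simpa [Real.norm_eq_abs] using h i

private lemma pow_sub_norm {n : Type*} [Fintype n] [DecidableEq n]
    (Amat Bmat : Matrix n n ℝ) {β d : ℝ} (hβ : 0 ≤ β) (hA : ‖Amat‖ ≤ β) (hB : ‖Bmat‖ ≤ β)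
    (hd : ‖Amat - Bmat‖ ≤ d) :
    ∀ m : ℕ, ‖Amat ^ (m + 1) - Bmat ^ (m + 1)‖ ≤ ((m : ℝ) + 1) * β ^ m * d := by
  have hd0 : 0 ≤ d := le_trans (norm_nonneg _) hd
  intro m
  induction m with
  | zero => simpa using hd
  | succ m ih =>
    have key : Amat ^ (m + 2) - Bmat ^ (m + 2)
        = Amat * (Amat ^ (m + 1) - Bmat ^ (m + 1)) + (Amat - Bmat) * Bmat ^ (m + 1) := by
      rw [pow_succ' Amat (m + 1), pow_succ' Bmat (m + 1), mul_sub, sub_mul]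
      abel
    have h1 : ‖Amat * (Amat ^ (m + 1) - Bmat ^ (m + 1))‖ ≤ β * (((m : ℝ) + 1) * β ^ m * d) := by
      refine (norm_mul_le _ _).trans ?_
      exact mul_le_mul hA ih (norm_nonneg _) hβ
    have h2 : ‖(Amat - Bmat) * Bmat ^ (m + 1)‖ ≤ d * β ^ (m + 1) := by
      refine (norm_mul_le _ _).trans ?_
      refine mul_le_mul hd ((norm_pow_le' _ (Nat.succ_pos m)).trans ?_) (norm_nonneg _) hd0
      exact pow_le_pow_left₀ (norm_nonneg _) hB _
    rw [show m + 1 + 1 = m + 2 from rfl, key]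
    refine ((norm_add_le _ _).trans (add_le_add h1 h2)).trans (le_of_eq ?_)
    push_cast
    ring

private lemma sum_mul_geom_le {β : ℝ} (h0 : 0 ≤ β) (h1 : β < 1) (k : ℕ) :
    ∑ n ∈ Finset.range k, ((n : ℝ) + 1) * β ^ n ≤ 1 / (1 - β) ^ 2 := by
  have h1' : ‖β‖ < 1 := by rwa [Real.norm_eq_abs, abs_of_nonneg h0]
  have hg : HasSum (fun n : ℕ => ((n : ℝ) + 1) * β ^ n) (β / (1 - β) ^ 2 + (1 - β)⁻¹) := by
    have := (hasSum_coe_mul_geometric_of_norm_lt_one h1').add (hasSum_geometric_of_lt_one h0 h1)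
    have e : (fun n : ℕ => ((n : ℝ) + 1) * β ^ n) = fun n : ℕ => (n : ℝ) * β ^ n + β ^ n := by
      funext n
      ring
    rw [e]
    exact this
  have hle := sum_le_hasSum (Finset.range k) (fun n _ => by positivity) hg
  refine hle.trans (le_of_eq ?_)
  have hne : (1 - β) ≠ 0 := by intro h; rw [sub_eq_zero] at h; exact h1.ne h.symm
  field_simp
  ring

private lemma dot_bound {n : Type*} [Fintype n] [DecidableEq n]
    (M : Matrix n n ℝ) (v R : n → ℝ) {cv cM cR : ℝ}
    (hv : ∑ p, |v p| ≤ cv) (hM : ‖M‖ ≤ cM) (hR : ‖R‖ ≤ cR)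
    (hcM : 0 ≤ cM) (hcR : 0 ≤ cR) :
    abs (∑ p, (Matrix.transpose M).mulVec v p * R p) ≤ cv * (cM * cR) := by
  have hw : ‖M.mulVec R‖ ≤ cM * cR :=
    (Matrix.linfty_opNorm_mulVec M R).trans (mul_le_mul hM hR (norm_nonneg _) hcM)
  have hrw : ∑ p, (Matrix.transpose M).mulVec v p * R p = ∑ p, v p * M.mulVec R p := by
    change dotProduct ((Matrix.transpose M).mulVec v) R = dotProduct v (M.mulVec R)
    rw [Matrix.mulVec_transpose, ← Matrix.dotProduct_mulVec]
  rw [hrw]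
  calc abs (∑ p, v p * M.mulVec R p) ≤ ∑ p, |v p| * |M.mulVec R p| := by
        refine (Finset.abs_sum_le_sum_abs _ _).trans (le_of_eq ?_)
        simp [abs_mul]
    _ ≤ ∑ p, |v p| * (cM * cR) := by
        refine Finset.sum_le_sum fun p _ => mul_le_mul_of_nonneg_left ?_ (abs_nonneg _)
        refine le_trans ?_ hw
        simpa [Real.norm_eq_abs] using norm_le_pi_norm (M.mulVec R) p
    _ = (∑ p, |v p|) * (cM * cR) := (Finset.sum_mul _ _ _).symm
    _ ≤ cv * (cM * cR) := mul_le_mul_of_nonneg_right hv (by positivity)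
/-- Bound on the `E`-term of the bias decomposition. -/
theorem E_term_bound
    {S A : Type*} [Fintype S] [Fintype A] [Nonempty S] [Nonempty A]
    [DecidableEq S] [DecidableEq A]
    (P : S → A → S → ℝ) (hP0 : ∀ s a s', 0 ≤ P s a s')
    (hP1 : ∀ s a, ∑ s', P s a s' = 1)
    (r : S → A → ℝ) (hr0 : ∀ s a, 0 ≤ r s a) (hr1 : ∀ s a, r s a ≤ 1)
    (γ : ℝ) (hγ0 : 0 ≤ γ) (hγ1 : γ < 1)
    (σ : S × A → ℝ) (σt : ℝ) (hσt : 0 < σt) (hσ : ∀ p, σt ≤ σ p ∧ σ p ≤ 1)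
    (α : ℝ) (hα0 : 0 < α) (hα1 : α ≤ 1)
    (η lam : ℝ) (hη : 0 < η) (hlam : 0 < lam)
    (k : ℕ) (hk : 1 ≤ k)
    (polstar : S → A → ℝ)
    (hstar0 : ∀ s a, 0 ≤ polstar s a) (hstar1 : ∀ s, ∑ a, polstar s a = 1)
    (pol : ℕ → S → A → ℝ)
    (hpol0 : ∀ j ≤ k, ∀ s a, 0 ≤ pol j s a)
    (hpol1 : ∀ j ≤ k, ∀ s, ∑ a, pol j s a = 1)
    (hshift : ∀ j, 1 ≤ j → j ≤ k →
      ‖(fun p : S × A => pol j p.1 p.2 - pol (j - 1) p.1 p.2)‖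
        ≤ (Fintype.card A : ℝ) * η / (lam * (1 - γ)))
    (R : ℕ → S × A → ℝ)
    (hR : ∀ j, 1 ≤ j → j ≤ k → ‖R (j - 1)‖ ≤ 1 / (1 - γ)) :
    ∀ s : S,
      (∑ j ∈ Finset.Icc 1 k,
          |∑ p : S × A,
              (Matrix.transpose
                ((((1 : Matrix (S × A) (S × A) ℝ)
                    - α • (Matrix.diagonal σ
                        * (1 - γ • saMatrix P (pol j)))) ^ (k - j + 1))
                  - (((1 : Matrix (S × A) (S × A) ℝ)
                      - α • (Matrix.diagonal σ
                          * (1 - γ • saMatrix P (pol (j - 1))))) ^ (k - j + 1)))).mulVec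
                ((Jmat s).mulVec
                  (fun q : S × A => polstar q.1 q.2 - pol (j - 1) q.1 q.2)) p
              * R (j - 1) p|)
        ≤ 2 * γ * (Fintype.card A : ℝ) ^ 2 * η
            / (α * lam * σt ^ 2 * (1 - γ) ^ 4) := by
  intro s
  have hγ' : 0 < 1 - γ := by linarith
  obtain ⟨p0⟩ : Nonempty (S × A) := inferInstance
  have hσt1 : σt ≤ 1 := le_trans (hσ p0).1 (hσ p0).2
  set capA : ℝ := (Fintype.card A : ℝ) with hcapA_def
  have hcapA : 0 < capA := by
    rw [hcapA_def]
    exact_mod_cast (Fintype.card_pos : 0 < Fintype.card A)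
  set ε : ℝ := capA * η / (lam * (1 - γ)) with hε_def
  have hε0 : 0 ≤ ε := by positivity
  set C : ℝ := α * γ * capA * ε with hC_def
  have hC0 : 0 ≤ C := by positivity
  set β : ℝ := 1 - α * σt * (1 - γ) with hβ_def
  have hβ0 : 0 ≤ β := by
    have h1 : α * σt ≤ 1 := by nlinarith
    nlinarith
  have hβ1 : β < 1 := by nlinarith [mul_pos (mul_pos hα0 hσt) hγ']
  -- row sums of transition part
  have hPsum : ∀ j, j ≤ k → ∀ (a : S) (b : A),
      ∑ q : S × A, P a b q.1 * pol j q.1 q.2 = 1 := by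
    intro j hj a b
    rw [Fintype.sum_prod_type]
    have h : ∀ s' : S, ∑ a' : A, P a b s' * pol j s' a' = P a b s' := by
      intro s'
      rw [← Finset.mul_sum, hpol1 j hj s', mul_one]
    simp_rw [h]
    exact hP1 a b
  have hPcard : ∀ (a : S) (b : A), ∑ q : S × A, P a b q.1 = capA := by
    intro a b
    rw [Fintype.sum_prod_type]
    simp only [Finset.sum_const, Finset.card_univ, nsmul_eq_mul]
    rw [← Finset.mul_sum, hP1 a b, mul_one, hcapA_def]
  -- entries of the matrices A_j
  have hent : ∀ j (p q : S × A),
      ((1 : Matrix (S × A) (S × A) ℝ)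
          - α • (Matrix.diagonal σ * (1 - γ • saMatrix P (pol j)))) p q
        = (if p = q then 1 - α * σ p else 0)
          + α * σ p * γ * (P p.1 p.2 q.1 * pol j q.1 q.2) := by
    intro j p q
    simp only [Matrix.sub_apply, Matrix.smul_apply, Matrix.diagonal_mul, Matrix.one_apply,
      saMatrix, Matrix.of_apply, smul_eq_mul]
    split_ifs <;> ring
  -- norm bound for A_j
  have hAnorm : ∀ j, j ≤ k →
      ‖(1 : Matrix (S × A) (S × A) ℝ)
          - α • (Matrix.diagonal σ * (1 - γ • saMatrix P (pol j)))‖ ≤ β := by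
    intro j hj
    refine mat_norm_le _ hβ0 fun p => ?_
    have hσp := hσ p
    have hrow : ∑ q : S × A, ((if p = q then 1 - α * σ p else 0)
        + α * σ p * γ * (P p.1 p.2 q.1 * pol j q.1 q.2)) = 1 - α * σ p * (1 - γ) := by
      rw [Finset.sum_add_distrib, Finset.sum_ite_eq, ← Finset.mul_sum, hPsum j hj p.1 p.2]
      simp only [Finset.mem_univ, if_true]
      ring
    calc ∑ q : S × A, |((1 : Matrix (S × A) (S × A) ℝ)
            - α • (Matrix.diagonal σ * (1 - γ • saMatrix P (pol j)))) p q|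
        = ∑ q : S × A, ((if p = q then 1 - α * σ p else 0)
            + α * σ p * γ * (P p.1 p.2 q.1 * pol j q.1 q.2)) := by
          refine Finset.sum_congr rfl fun q _ => ?_
          rw [hent j p q, abs_of_nonneg]
          have h2 : 0 ≤ α * σ p * γ * (P p.1 p.2 q.1 * pol j q.1 q.2) :=
            mul_nonneg (mul_nonneg (mul_nonneg hα0.le (le_trans hσt.le hσp.1)) hγ0)
              (mul_nonneg (hP0 p.1 p.2 q.1) (hpol0 j hj q.1 q.2))
          have h3 : α * σ p ≤ 1 := by nlinarith [hσp.1, hσp.2]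
          split_ifs <;> linarith
      _ = 1 - α * σ p * (1 - γ) := hrow
      _ ≤ β := by
          have h4 : α * σt * (1 - γ) ≤ α * σ p * (1 - γ) :=
            mul_le_mul_of_nonneg_right (mul_le_mul_of_nonneg_left hσp.1 hα0.le) hγ'.le
          rw [hβ_def]; linarith
  -- norm bound for A_j - A_{j-1}
  have hdiff : ∀ j, 1 ≤ j → j ≤ k →
      ‖((1 : Matrix (S × A) (S × A) ℝ)
          - α • (Matrix.diagonal σ * (1 - γ • saMatrix P (pol j))))
        - ((1 : Matrix (S × A) (S × A) ℝ)
          - α • (Matrix.diagonal σ * (1 - γ • saMatrix P (pol (j - 1)))))‖ ≤ C := by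
    intro j hj1 hjk
    have hΔ : ∀ q : S × A, |pol j q.1 q.2 - pol (j - 1) q.1 q.2| ≤ ε := by
      intro q
      refine le_trans ?_ (hshift j hj1 hjk)
      simpa [Real.norm_eq_abs] using
        norm_le_pi_norm (fun p : S × A => pol j p.1 p.2 - pol (j - 1) p.1 p.2) q
    refine mat_norm_le _ hC0 fun p => ?_
    have hσp := hσ p
    have hcalc : ∀ q : S × A,
        |(((1 : Matrix (S × A) (S × A) ℝ)
            - α • (Matrix.diagonal σ * (1 - γ • saMatrix P (pol j))))
          - ((1 : Matrix (S × A) (S × A) ℝ)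
            - α • (Matrix.diagonal σ * (1 - γ • saMatrix P (pol (j - 1)))))) p q|
          ≤ α * γ * ε * P p.1 p.2 q.1 := by
      intro q
      have hPq := hP0 p.1 p.2 q.1
      rw [Matrix.sub_apply, hent j p q, hent (j - 1) p q]
      have hre : ((if p = q then 1 - α * σ p else 0)
            + α * σ p * γ * (P p.1 p.2 q.1 * pol j q.1 q.2))
          - ((if p = q then 1 - α * σ p else 0)
            + α * σ p * γ * (P p.1 p.2 q.1 * pol (j - 1) q.1 q.2))
          = (α * σ p * γ * P p.1 p.2 q.1) * (pol j q.1 q.2 - pol (j - 1) q.1 q.2) := by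
        ring
      rw [hre, abs_mul]
      have hc0 : 0 ≤ α * σ p * γ * P p.1 p.2 q.1 :=
        mul_nonneg (mul_nonneg (mul_nonneg hα0.le (le_trans hσt.le hσp.1)) hγ0) hPq
      rw [abs_of_nonneg hc0]
      have hc1 : α * σ p * γ * P p.1 p.2 q.1 ≤ α * γ * P p.1 p.2 q.1 := by
        nlinarith [mul_nonneg (mul_nonneg (mul_nonneg hα0.le hγ0) hPq)
          (by linarith [hσp.2] : (0:ℝ) ≤ 1 - σ p)]
      calc α * σ p * γ * P p.1 p.2 q.1 * |pol j q.1 q.2 - pol (j - 1) q.1 q.2|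
          ≤ (α * γ * P p.1 p.2 q.1) * ε :=
            mul_le_mul hc1 (hΔ q) (abs_nonneg _)
              (mul_nonneg (mul_nonneg hα0.le hγ0) hPq)
        _ = α * γ * ε * P p.1 p.2 q.1 := by ring
    calc ∑ q : S × A, |(((1 : Matrix (S × A) (S × A) ℝ)
            - α • (Matrix.diagonal σ * (1 - γ • saMatrix P (pol j))))
          - ((1 : Matrix (S × A) (S × A) ℝ)
            - α • (Matrix.diagonal σ * (1 - γ • saMatrix P (pol (j - 1)))))) p q|
        ≤ ∑ q : S × A, α * γ * ε * P p.1 p.2 q.1 := Finset.sum_le_sum fun q _ => hcalc q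
      _ = α * γ * ε * ∑ q : S × A, P p.1 p.2 q.1 := by rw [← Finset.mul_sum]
      _ = α * γ * ε * capA := by rw [hPcard p.1 p.2]
      _ = C := by rw [hC_def]; ring
  -- per-term bound
  have hbound : ∀ j ∈ Finset.Icc 1 k,
      |∑ p : S × A,
          (Matrix.transpose
            ((((1 : Matrix (S × A) (S × A) ℝ)
                - α • (Matrix.diagonal σ
                    * (1 - γ • saMatrix P (pol j)))) ^ (k - j + 1))
              - (((1 : Matrix (S × A) (S × A) ℝ)
                  - α • (Matrix.diagonal σ
                      * (1 - γ • saMatrix P (pol (j - 1))))) ^ (k - j + 1)))).mulVec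
            ((Jmat s).mulVec
              (fun q : S × A => polstar q.1 q.2 - pol (j - 1) q.1 q.2)) p
          * R (j - 1) p|
        ≤ 2 * C / (1 - γ) * ((((k - j : ℕ) : ℝ) + 1) * β ^ (k - j)) := by
    intro j hj
    obtain ⟨hj1, hjk⟩ := Finset.mem_Icc.mp hj
    have hjk' : j - 1 ≤ k := le_trans (Nat.sub_le j 1) hjk
    -- the vector bound
    have hv : ∑ p : S × A,
        |(Jmat s).mulVec (fun q : S × A => polstar q.1 q.2 - pol (j - 1) q.1 q.2) p| ≤ 2 := by
      have hvp : ∀ p : S × A,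
          (Jmat s).mulVec (fun q : S × A => polstar q.1 q.2 - pol (j - 1) q.1 q.2) p
            = (if p.1 = s then 1 else 0) * (polstar p.1 p.2 - pol (j - 1) p.1 p.2) := by
        intro p
        rw [Jmat, Matrix.mulVec_diagonal]
      have hstep : ∑ p : S × A,
          |(Jmat s).mulVec (fun q : S × A => polstar q.1 q.2 - pol (j - 1) q.1 q.2) p|
          = ∑ a : A, |polstar s a - pol (j - 1) s a| := by
        simp_rw [hvp, abs_mul]
        rw [Fintype.sum_prod_type]
        have h : ∀ s' : S, ∑ a : A,
            |if s' = s then (1:ℝ) else 0| * |polstar s' a - pol (j - 1) s' a|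
            = if s' = s then ∑ a : A, |polstar s a - pol (j - 1) s a| else 0 := by
          intro s'
          split_ifs with h'
          · subst h'; simp
          · simp
        rw [Finset.sum_congr rfl fun s' _ => h s']
        simp
      rw [hstep]
      have hb : ∀ a : A, |polstar s a - pol (j - 1) s a|
          ≤ polstar s a + pol (j - 1) s a := by
        intro a
        have h1 := hstar0 s a
        have h2 := hpol0 (j - 1) hjk' s a
        rw [abs_sub_le_iff]
        constructor <;> linarith
      calc ∑ a : A, |polstar s a - pol (j - 1) s a|
          ≤ ∑ a : A, (polstar s a + pol (j - 1) s a) := Finset.sum_le_sum fun a _ => hb a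
        _ = 2 := by rw [Finset.sum_add_distrib, hstar1 s, hpol1 (j - 1) hjk' s]; norm_num
    have hM := pow_sub_norm
      ((1 : Matrix (S × A) (S × A) ℝ)
        - α • (Matrix.diagonal σ * (1 - γ • saMatrix P (pol j))))
      ((1 : Matrix (S × A) (S × A) ℝ)
        - α • (Matrix.diagonal σ * (1 - γ • saMatrix P (pol (j - 1)))))
      hβ0 (hAnorm j hjk) (hAnorm (j - 1) hjk') (hdiff j hj1 hjk) (k - j)
    have hRj := hR j hj1 hjk
    have hcM0 : 0 ≤ (((k - j : ℕ) : ℝ) + 1) * β ^ (k - j) * C := by positivity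
    refine (dot_bound _ _ _ hv hM hRj hcM0 (by positivity)).trans (le_of_eq ?_)
    ring
  calc (∑ j ∈ Finset.Icc 1 k,
        |∑ p : S × A,
            (Matrix.transpose
              ((((1 : Matrix (S × A) (S × A) ℝ)
                  - α • (Matrix.diagonal σ
                      * (1 - γ • saMatrix P (pol j)))) ^ (k - j + 1))
                - (((1 : Matrix (S × A) (S × A) ℝ)
                    - α • (Matrix.diagonal σ
                        * (1 - γ • saMatrix P (pol (j - 1))))) ^ (k - j + 1)))).mulVec
              ((Jmat s).mulVec
                (fun q : S × A => polstar q.1 q.2 - pol (j - 1) q.1 q.2)) p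
            * R (j - 1) p|)
      ≤ ∑ j ∈ Finset.Icc 1 k,
          2 * C / (1 - γ) * ((((k - j : ℕ) : ℝ) + 1) * β ^ (k - j)) :=
        Finset.sum_le_sum hbound
    _ = 2 * C / (1 - γ) * ∑ j ∈ Finset.Icc 1 k, (((k - j : ℕ) : ℝ) + 1) * β ^ (k - j) := by
        rw [Finset.mul_sum]
    _ = 2 * C / (1 - γ) * ∑ n ∈ Finset.range k, ((n : ℝ) + 1) * β ^ n := by
        congr 1
        refine Finset.sum_nbij' (fun j => k - j) (fun n => k - n)
          (fun j hj => ?_) (fun n hn => ?_) (fun j hj => ?_) (fun n hn => ?_) (fun j hj => rfl)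
        · simp only [Finset.mem_Icc] at hj
          simp only [Finset.mem_range]
          omega
        · simp only [Finset.mem_range] at hn
          simp only [Finset.mem_Icc]
          omega
        · simp only [Finset.mem_Icc] at hj
          show k - (k - j) = j
          omega
        · simp only [Finset.mem_range] at hn
          show k - (k - n) = n
          omega
    _ ≤ 2 * C / (1 - γ) * (1 / (1 - β) ^ 2) :=
        mul_le_mul_of_nonneg_left (sum_mul_geom_le hβ0 hβ1 k) (by positivity)
    _ = 2 * γ * capA ^ 2 * η / (α * lam * σt ^ 2 * (1 - γ) ^ 4) := by
        have h1β : 1 - β = α * σt * (1 - γ) := by rw [hβ_def]; ring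
        rw [h1β, hC_def, hε_def]
        field_simp
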